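/- Let m ∈ ℝ, β > 0, and let F : (m − β, m) → ℂ be a C¹ function. Suppose there are constants B ≥ 0, p₀ ≥ 0 and p₁ ≥ 0 such that for every α ∈ (0, β): sup_{ω ∈ (m−α, m)} |F(ω)| ≤ B·(min(α, 1))^{p₀} and ∫_{m−β}^{m−α} |F'(ω)| dω ≤ B·α^{−p₁}. Then there exist C > 0 and t₀ ≥ 1, depending only on m, p₀, p₁, such that for all t ≥ t₀: (1) |∫_{m−β}^{m} e^{−itω}·F(ω) dω| ≤ C·B·t^{−(p₀+1)/(p₀+p₁+1)}; and (2) for every d with 0 < d ≤ min(β, 1), |∫_{m−β}^{m−d} e^{−itω}·F(ω) dω| ≤ C·B·t^{−1}·d^{−p₁}. -/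

import Mathlib

open MeasureTheory Set

/-- Brute-force oscillatory integral estimate: if `F` is `C¹` on `(m−β, m)` with
`sup_{(m−α,m)} |F| ≤ B·min(α,1)^{p₀}` and `‖F'‖_{L¹(m−β,m−α)} ≤ B·α^{−p₁}` for every
`α ∈ (0,β)`, then for `t` large (depending only on `m, p₀, p₁`) one has
`|∫ e^{−itω}F| ≲ B t^{−(p₀+1)/(p₀+p₁+1)}`, and `|∫_{m−β}^{m−d} e^{−itω}F| ≲ B t⁻¹ d^{−p₁}`. -/


lemma aux_norm_exp (t ω : ℝ) : ‖Complex.exp (-Complex.I * t * ω)‖ = 1 := by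
  rw [Complex.norm_exp]; simp

lemma aux_ptwise {m β B p₀ : ℝ} (hB : 0 ≤ B) (hp₀ : 0 ≤ p₀) {F : ℝ → ℂ}
    (hyp : ∀ α : ℝ, α ∈ Ioo (0:ℝ) β → ∀ ω ∈ Ioo (m - α) m, ‖F ω‖ ≤ B * (min α 1) ^ p₀) :
    ∀ ω ∈ Ioo (m - β) m, ‖F ω‖ ≤ B * (min β 1) ^ p₀ := by
  intro ω hω
  obtain ⟨hω1, hω2⟩ := hω
  set α := ((m - ω) + β) / 2 with hαdef
  have h1 : m - ω < α := by rw [hαdef]; linarith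
  have h2 : α < β := by rw [hαdef]; linarith
  have h3 : 0 < α := by rw [hαdef]; linarith
  have := hyp α ⟨h3, h2⟩ ω ⟨by linarith, hω2⟩
  refine this.trans (mul_le_mul_of_nonneg_left ?_ hB)
  exact Real.rpow_le_rpow (le_min h3.le zero_le_one) (min_le_min h2.le le_rfl) hp₀

lemma aux_ptwise' {m β B p₀ : ℝ} (hβ : 0 < β) (hB : 0 ≤ B) (hp₀ : 0 ≤ p₀) {F : ℝ → ℂ}
    (hyp : ∀ α : ℝ, α ∈ Ioo (0:ℝ) β → ∀ ω ∈ Ioo (m - α) m, ‖F ω‖ ≤ B * (min α 1) ^ p₀) :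
    ∀ ω ∈ Ioo (m - β) m, ‖F ω‖ ≤ B := by
  intro ω hω
  refine (aux_ptwise hB hp₀ hyp ω hω).trans ?_
  have h0 : 0 < min β 1 := lt_min hβ one_pos
  calc B * (min β 1) ^ p₀ ≤ B * 1 :=
        mul_le_mul_of_nonneg_left (Real.rpow_le_one h0.le (min_le_right _ _) hp₀) hB
    _ = B := mul_one B

lemma aux_integrable {m β B : ℝ} {F : ℝ → ℂ}
    (hF : ContinuousOn F (Ioo (m - β) m))
    (hFb : ∀ ω ∈ Ioo (m - β) m, ‖F ω‖ ≤ B) (t : ℝ) {a c : ℝ}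
    (hs : Ioo a c ⊆ Ioo (m - β) m) :
    IntegrableOn (fun ω : ℝ => Complex.exp (-Complex.I * t * ω) * F ω) (Ioo a c) := by
  have hcont : ContinuousOn (fun ω : ℝ => Complex.exp (-Complex.I * t * ω) * F ω) (Ioo a c) := by
    refine ContinuousOn.mul ?_ (hF.mono hs)
    exact ((Complex.continuous_exp.comp (by continuity : Continuous fun ω : ℝ =>
      -Complex.I * t * ω))).continuousOn
  refine ⟨hcont.aestronglyMeasurable measurableSet_Ioo, ?_⟩
  refine HasFiniteIntegral.restrict_of_bounded (C := B) (by exact measure_Ioo_lt_top) ?_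
  refine (ae_restrict_iff' measurableSet_Ioo).2 (ae_of_all _ fun ω hω => ?_)
  rw [norm_mul, aux_norm_exp, one_mul]
  exact hFb ω (hs hω)

lemma aux_const_bound {m β B M t a c : ℝ} {F : ℝ → ℂ}
    (hF : ContinuousOn F (Ioo (m - β) m))
    (hFb : ∀ ω ∈ Ioo (m - β) m, ‖F ω‖ ≤ B)
    (hs : Ioo a c ⊆ Ioo (m - β) m) (hac : a ≤ c)
    (hM : ∀ ω ∈ Ioo a c, ‖F ω‖ ≤ M) :
    ‖∫ ω in Ioo a c, Complex.exp (-Complex.I * t * ω) * F ω‖ ≤ M * (c - a) := by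
  have h := norm_setIntegral_le_of_norm_le_const (μ := volume) (s := Ioo a c)
    (f := fun ω : ℝ => Complex.exp (-Complex.I * t * ω) * F ω)
    (C := M) (by exact measure_Ioo_lt_top) (fun x hx => by
      rw [norm_mul, aux_norm_exp, one_mul]; exact hM x hx)
  rwa [Real.volume_real_Ioo_of_le hac] at h

lemma aux_ibp {m β B p₁ t α a : ℝ} (hB : 0 ≤ B) (ht : 0 < t)
    {F : ℝ → ℂ} (hF : ContDiffOn ℝ 1 F (Ioo (m - β) m))
    (hFb : ∀ ω ∈ Ioo (m - β) m, ‖F ω‖ ≤ B)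
    (hL : (∫⁻ ω in Set.Ioo (m - β) (m - α), ENNReal.ofReal ‖deriv F ω‖)
          ≤ ENNReal.ofReal (B * α ^ (-p₁)))
    (hα : α ∈ Ioo (0:ℝ) β) (ha : a ∈ Ioo (m - β) (m - α)) :
    ‖∫ ω in Ioo a (m - α), Complex.exp (-Complex.I * t * ω) * F ω‖
      ≤ t⁻¹ * (2 * B + B * α ^ (-p₁)) := by
  set b := m - α with hbdef
  have hab : a < b := ha.2
  have ha0 : m - β < a := ha.1
  have hbm : b < m := by rw [hbdef]; linarith [hα.1]
  have hBa : 0 ≤ B * α ^ (-p₁) := mul_nonneg hB (Real.rpow_nonneg hα.1.le _)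
  set c : ℂ := -Complex.I * t with hcdef
  have hc : c ≠ 0 := by
    simp only [hcdef, neg_mul, neg_ne_zero, mul_ne_zero_iff]
    exact ⟨Complex.I_ne_zero, by exact_mod_cast ht.ne'⟩
  set u : ℝ → ℂ := fun ω => c⁻¹ * Complex.exp (c * ω) with hudef
  have hnormc : ‖c‖ = t := by
    rw [hcdef]; simp [norm_mul, Complex.norm_real, abs_of_pos ht]
  have hnormu : ∀ ω : ℝ, ‖u ω‖ = t⁻¹ := by
    intro ω
    rw [hudef]
    simp only [norm_mul, norm_inv, hnormc]
    have : ‖Complex.exp (c * ω)‖ = 1 := by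
      rw [hcdef]; exact aux_norm_exp t ω
    rw [this, mul_one]
  have hu : ∀ x ∈ uIcc a b, HasDerivAt u (Complex.exp (c * x)) x := by
    intro x _
    have h1 : HasDerivAt (fun y : ℂ => Complex.exp (c * y)) (c * Complex.exp (c * x)) (x : ℂ) := by
      have h0 := ((hasDerivAt_id (x:ℂ)).const_mul c).cexp
      simpa [id, mul_comm] using h0
    have h2 := (h1.comp_ofReal).const_mul c⁻¹
    simpa [hudef, ← mul_assoc, inv_mul_cancel₀ hc] using h2
  have hsub : uIcc a b ⊆ Ioo (m - β) m := by
    rw [uIcc_of_le hab.le]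
    intro x hx
    exact ⟨lt_of_lt_of_le ha0 hx.1, lt_of_le_of_lt hx.2 hbm⟩
  have hv : ∀ x ∈ uIcc a b, HasDerivAt F (deriv F x) x := by
    intro x hx
    have hdx : DifferentiableAt ℝ F x := by
      have := (hF.differentiableOn one_ne_zero).differentiableAt
        (isOpen_Ioo.mem_nhds (hsub hx))
      exact this
    exact hdx.hasDerivAt
  have hcontd : ContinuousOn (deriv F) (Ioo (m - β) m) :=
    hF.continuousOn_deriv_of_isOpen isOpen_Ioo (le_refl 1)
  have hiu' : IntervalIntegrable (fun x : ℝ => Complex.exp (c * x)) volume a b :=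
    (Complex.continuous_exp.comp (by continuity : Continuous fun ω : ℝ => c * ω)).intervalIntegrable a b
  have hiv' : IntervalIntegrable (deriv F) volume a b :=
    (hcontd.mono hsub).intervalIntegrable
  have hibp := intervalIntegral.integral_mul_deriv_eq_deriv_mul hu hv hiu' hiv'
  have hkey : ∫ x in a..b, Complex.exp (c * x) * F x
      = u b * F b - u a * F a - ∫ x in a..b, u x * deriv F x := by
    rw [hibp]; ring
  have hset : ∫ ω in Ioo a b, Complex.exp (-Complex.I * t * ω) * F ω
      = ∫ x in a..b, Complex.exp (c * x) * F x := by
    rw [intervalIntegral.integral_of_le hab.le, ← MeasureTheory.integral_Ioc_eq_integral_Ioo]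
  rw [hset, hkey]
  have hFint : IntegrableOn (deriv F) (Ioo (m - β) b) := by
    refine ⟨(hcontd.mono ?_).aestronglyMeasurable measurableSet_Ioo, ?_⟩
    · exact fun x hx => ⟨hx.1, lt_trans hx.2 hbm⟩
    · rw [HasFiniteIntegral]
      calc ∫⁻ x in Ioo (m - β) b, ‖deriv F x‖ₑ
          = ∫⁻ ω in Ioo (m - β) b, ENNReal.ofReal ‖deriv F ω‖ := by
            simp_rw [ofReal_norm]
        _ ≤ ENNReal.ofReal (B * α ^ (-p₁)) := hL
        _ < ⊤ := ENNReal.ofReal_lt_top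
  have hnorm_int : ∫ x in a..b, ‖u x * deriv F x‖ ≤ t⁻¹ * (B * α ^ (-p₁)) := by
    have heq : ∀ x : ℝ, ‖u x * deriv F x‖ = t⁻¹ * ‖deriv F x‖ := fun x => by
      rw [norm_mul, hnormu]
    simp_rw [heq]
    rw [intervalIntegral.integral_of_le hab.le, MeasureTheory.integral_Ioc_eq_integral_Ioo,
      MeasureTheory.integral_const_mul]
    refine mul_le_mul_of_nonneg_left ?_ (inv_nonneg.2 ht.le)
    have h1 : ∫ x in Ioo a b, ‖deriv F x‖ ≤ ∫ x in Ioo (m - β) b, ‖deriv F x‖ := by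
      refine setIntegral_mono_set hFint.norm (ae_of_all _ fun x => norm_nonneg _) ?_
      refine HasSubset.Subset.eventuallyLE fun x hx => ⟨lt_trans ha0 hx.1, hx.2⟩
    refine h1.trans ?_
    have h2 : ∫ x in Ioo (m - β) b, ‖deriv F x‖
        = (∫⁻ ω in Ioo (m - β) b, ENNReal.ofReal ‖deriv F ω‖).toReal := by
      rw [MeasureTheory.integral_norm_eq_lintegral_enorm hFint.aestronglyMeasurable]
      simp_rw [ofReal_norm]
    rw [h2]
    exact ENNReal.toReal_le_of_le_ofReal hBa hL
  have hFa : ‖F a‖ ≤ B := hFb a ⟨ha0, lt_trans hab hbm⟩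
  have hFbnd : ‖F b‖ ≤ B := hFb b ⟨lt_trans ha0 hab, hbm⟩
  calc ‖u b * F b - u a * F a - ∫ x in a..b, u x * deriv F x‖
      ≤ ‖u b * F b - u a * F a‖ + ‖∫ x in a..b, u x * deriv F x‖ := norm_sub_le _ _
    _ ≤ (‖u b * F b‖ + ‖u a * F a‖) + ‖∫ x in a..b, u x * deriv F x‖ := by
        gcongr; exact norm_sub_le _ _
    _ ≤ (t⁻¹ * B + t⁻¹ * B) + t⁻¹ * (B * α ^ (-p₁)) := by
        gcongr
        · rw [norm_mul, hnormu]; exact mul_le_mul_of_nonneg_left hFbnd (inv_nonneg.2 ht.le)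
        · rw [norm_mul, hnormu]; exact mul_le_mul_of_nonneg_left hFa (inv_nonneg.2 ht.le)
        · exact (intervalIntegral.norm_integral_le_abs_integral_norm.trans
            (by rw [abs_of_nonneg]; exact hnorm_int;
                exact intervalIntegral.integral_nonneg hab.le fun x _ => norm_nonneg _)).trans
            le_rfl
    _ = t⁻¹ * (2 * B + B * α ^ (-p₁)) := by ring

lemma aux_far {m β B p₁ t α : ℝ} (hB : 0 ≤ B) (ht : 0 < t)
    {F : ℝ → ℂ} (hF : ContDiffOn ℝ 1 F (Ioo (m - β) m))
    (hFb : ∀ ω ∈ Ioo (m - β) m, ‖F ω‖ ≤ B)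
    (hL : (∫⁻ ω in Set.Ioo (m - β) (m - α), ENNReal.ofReal ‖deriv F ω‖)
          ≤ ENNReal.ofReal (B * α ^ (-p₁)))
    (hα : α ∈ Ioo (0:ℝ) β) :
    ‖∫ ω in Ioo (m - β) (m - α), Complex.exp (-Complex.I * t * ω) * F ω‖
      ≤ t⁻¹ * (2 * B + B * α ^ (-p₁)) := by
  set a₀ := m - β with ha₀def
  set b := m - α with hbdef
  have hab : a₀ < b := by rw [ha₀def, hbdef]; linarith [hα.2]
  have hbm : b < m := by rw [hbdef]; linarith [hα.1]
  set g : ℝ → ℂ := fun ω => Complex.exp (-Complex.I * t * ω) * F ω with hgdef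
  set s : ℕ → Set ℝ := fun n => Ioo (a₀ + (b - a₀) / (n + 1)) b with hsdef
  have hmeas : ∀ n, MeasurableSet (s n) := fun n => measurableSet_Ioo
  have hmono : Monotone s := by
    intro n k hnk
    refine Ioo_subset_Ioo_left ?_
    have h1 : (0:ℝ) < n + 1 := by positivity
    have h2 : (n:ℝ) + 1 ≤ k + 1 := by exact_mod_cast by omega
    have h3 : (b - a₀) / ((k:ℝ) + 1) ≤ (b - a₀) / ((n:ℝ) + 1) :=
      div_le_div_of_nonneg_left (by linarith) h1 h2
    linarith
  have hunion : (⋃ n, s n) = Ioo a₀ b := by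
    apply Set.Subset.antisymm
    · refine iUnion_subset fun n => Ioo_subset_Ioo_left ?_
      have : (0:ℝ) < (b - a₀) / ((n:ℝ) + 1) := div_pos (by linarith) (by positivity)
      linarith
    · intro x hx
      have hx1 : 0 < x - a₀ := by linarith [hx.1]
      obtain ⟨n, hn⟩ := exists_nat_gt ((b - a₀) / (x - a₀))
      refine mem_iUnion.2 ⟨n, ?_, hx.2⟩
      have hb0 : 0 < b - a₀ := by linarith
      have h2 : b - a₀ < (n + 1) * (x - a₀) := by
        have := (div_lt_iff₀ hx1).1 (hn.trans (by linarith : (n:ℝ) < n + 1))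
        linarith
      have h3 : (b - a₀) / (n + 1) < x - a₀ := by
        rw [div_lt_iff₀ (by positivity : (0:ℝ) < (n:ℝ) + 1)]
        nlinarith
      linarith
  have hint : IntegrableOn g (⋃ n, s n) := by
    rw [hunion]
    exact aux_integrable hF.continuousOn hFb t (fun x hx => ⟨hx.1, lt_trans hx.2 hbm⟩)
  have htend := MeasureTheory.tendsto_setIntegral_of_monotone hmeas hmono hint
  rw [hunion] at htend
  have hM : 0 ≤ t⁻¹ * (2 * B + B * α ^ (-p₁)) := by
    have := Real.rpow_nonneg hα.1.le (-p₁)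
    positivity
  refine le_of_tendsto htend.norm (Filter.Eventually.of_forall fun n => ?_)
  by_cases hcase : a₀ + (b - a₀) / (n + 1) < b
  · refine aux_ibp hB ht hF hFb hL hα ⟨?_, hcase⟩
    have : (0:ℝ) < (b - a₀) / ((n:ℝ) + 1) := div_pos (by linarith) (by positivity)
    linarith
  · have he : s n = ∅ := Ioo_eq_empty hcase
    rw [he]
    simpa using hM


theorem statement15 (m p₀ p₁ : ℝ) (hp₀ : 0 ≤ p₀) (hp₁ : 0 ≤ p₁) :
    ∃ C t₀ : ℝ, 0 < C ∧ 1 ≤ t₀ ∧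
      ∀ β : ℝ, 0 < β → ∀ B : ℝ, 0 ≤ B →
      ∀ F : ℝ → ℂ, ContDiffOn ℝ 1 F (Set.Ioo (m - β) m) →
      (∀ α : ℝ, α ∈ Set.Ioo 0 β →
        (∀ ω ∈ Set.Ioo (m - α) m, ‖F ω‖ ≤ B * (min α 1) ^ p₀) ∧
        (∫⁻ ω in Set.Ioo (m - β) (m - α), ENNReal.ofReal ‖deriv F ω‖)
          ≤ ENNReal.ofReal (B * α ^ (-p₁))) →
      ∀ t : ℝ, t₀ ≤ t →
        (‖∫ ω in Set.Ioo (m - β) m, Complex.exp (-Complex.I * (t : ℂ) * (ω : ℂ)) * F ω‖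
          ≤ C * B * t ^ (-(p₀ + 1) / (p₀ + p₁ + 1))) ∧
        ∀ d : ℝ, 0 < d → d ≤ min β 1 →
          ‖∫ ω in Set.Ioo (m - β) (m - d), Complex.exp (-Complex.I * (t : ℂ) * (ω : ℂ)) * F ω‖
            ≤ C * B * t⁻¹ * d ^ (-p₁) := by
  refine ⟨4, 1, by norm_num, le_rfl, ?_⟩
  intro β hβ B hB F hF hyp t ht1
  have ht : 0 < t := lt_of_lt_of_le one_pos ht1
  have hFb : ∀ ω ∈ Ioo (m - β) m, ‖F ω‖ ≤ B :=
    aux_ptwise' hβ hB hp₀ (fun α hα => (hyp α hα).1)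
  constructor
  · -- part 1
    set σ := (p₀ + p₁ + 1)⁻¹ with hσdef
    have hσp : 0 < p₀ + p₁ + 1 := by linarith
    have hσpos : 0 < σ := by rw [hσdef]; positivity
    set A := t ^ (-σ) with hAdef
    have hA0 : 0 < A := Real.rpow_pos_of_pos ht _
    have hA1 : A ≤ 1 :=
      Real.rpow_le_one_of_one_le_of_nonpos ht1 (neg_nonpos.2 hσpos.le)
    have hT1 : A ^ (p₀ + 1) = t ^ (-(p₀ + 1) / (p₀ + p₁ + 1)) := by
      rw [hAdef, ← Real.rpow_mul ht.le]
      congr 1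
      rw [hσdef]
      field_simp
    have hT2 : t⁻¹ * A ^ (-p₁) = t ^ (-(p₀ + 1) / (p₀ + p₁ + 1)) := by
      rw [hAdef, ← Real.rpow_mul ht.le, ← Real.rpow_neg_one t, ← Real.rpow_add ht]
      congr 1
      rw [hσdef]
      field_simp
      ring
    have hTnn : 0 ≤ t ^ (-(p₀ + 1) / (p₀ + p₁ + 1)) := Real.rpow_nonneg ht.le _
    by_cases hc : β ≤ A
    · -- whole interval is "near"
      have hmin : min β 1 = β := min_eq_left (hc.trans hA1)
      have h := aux_const_bound (t := t) hF.continuousOn hFb (Set.Subset.refl _) (by linarith)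
        (aux_ptwise hB hp₀ (fun α hα => (hyp α hα).1))
      rw [show m - (m - β) = β by ring, hmin] at h
      refine h.trans ?_
      have hb1 : β ^ p₀ ≤ A ^ p₀ := Real.rpow_le_rpow hβ.le hc hp₀
      have hb2 : 0 ≤ A ^ p₀ := Real.rpow_nonneg hA0.le _
      have hb0 : 0 ≤ β ^ p₀ := Real.rpow_nonneg hβ.le _
      calc B * β ^ p₀ * β ≤ B * A ^ p₀ * A := by
            refine mul_le_mul (mul_le_mul_of_nonneg_left hb1 hB) hc hβ.le ?_
            exact mul_nonneg hB hb2
        _ = B * A ^ (p₀ + 1) := by rw [Real.rpow_add_one hA0.ne']; ring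
        _ = B * t ^ (-(p₀ + 1) / (p₀ + p₁ + 1)) := by rw [hT1]
        _ ≤ 4 * B * t ^ (-(p₀ + 1) / (p₀ + p₁ + 1)) := by nlinarith
    · push_neg at hc
      have hAβ : A ∈ Ioo 0 β := ⟨hA0, hc⟩
      have hU : Ioo (m - β) (m - A) ∪ Ico (m - A) m = Ioo (m - β) m :=
        Ioo_union_Ico_eq_Ioo (by linarith) (by linarith)
      have hdisj : Disjoint (Ioo (m - β) (m - A)) (Ico (m - A) m) :=
        Set.disjoint_left.2 fun x hx1 hx2 => absurd hx2.1 (not_le.2 hx1.2)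
      have hint1 : IntegrableOn (fun ω : ℝ => Complex.exp (-Complex.I * t * ω) * F ω)
          (Ioo (m - β) (m - A)) :=
        aux_integrable hF.continuousOn hFb t (fun x hx => ⟨hx.1, by linarith [hx.2]⟩)
      have hint2' : IntegrableOn (fun ω : ℝ => Complex.exp (-Complex.I * t * ω) * F ω)
          (Ioo (m - A) m) :=
        aux_integrable hF.continuousOn hFb t (fun x hx => ⟨by linarith [hx.1], hx.2⟩)
      have hint2 : IntegrableOn (fun ω : ℝ => Complex.exp (-Complex.I * t * ω) * F ω)
          (Ico (m - A) m) := by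
        refine IntegrableOn.congr_set_ae hint2' ?_
        exact (MeasureTheory.Ioo_ae_eq_Ico (a := m - A) (b := m)).symm
      have hsplit : ∫ ω in Ioo (m - β) m, Complex.exp (-Complex.I * t * ω) * F ω
          = (∫ ω in Ioo (m - β) (m - A), Complex.exp (-Complex.I * t * ω) * F ω)
            + ∫ ω in Ioo (m - A) m, Complex.exp (-Complex.I * t * ω) * F ω := by
        rw [← hU, setIntegral_union hdisj measurableSet_Ico hint1 hint2,
          MeasureTheory.integral_Ico_eq_integral_Ioo]
      rw [hsplit]
      refine (norm_add_le _ _).trans ?_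
      have hfar := aux_far hB ht hF hFb (hyp A hAβ).2 hAβ
      have hnear := aux_const_bound (t := t) hF.continuousOn hFb
        (fun x hx => ⟨by linarith [hx.1], hx.2⟩ :
          Ioo (m - A) m ⊆ Ioo (m - β) m) (by linarith) ((hyp A hAβ).1)
      rw [show m - (m - A) = A by ring, min_eq_left hA1] at hnear
      have hApow : (1:ℝ) ≤ A ^ (-p₁) :=
        Real.one_le_rpow_of_pos_of_le_one_of_nonpos hA0 hA1 (neg_nonpos.2 hp₁)
      have hApnn : 0 ≤ A ^ (-p₁) := Real.rpow_nonneg hA0.le _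
      have htinv : 0 ≤ t⁻¹ := inv_nonneg.2 ht.le
      calc ‖∫ ω in Ioo (m - β) (m - A), Complex.exp (-Complex.I * t * ω) * F ω‖
            + ‖∫ ω in Ioo (m - A) m, Complex.exp (-Complex.I * t * ω) * F ω‖
          ≤ t⁻¹ * (2 * B + B * A ^ (-p₁)) + B * A ^ p₀ * A := add_le_add hfar hnear
        _ ≤ 3 * B * (t⁻¹ * A ^ (-p₁)) + B * A ^ (p₀ + 1) := by
            have h1 : 2 * B + B * A ^ (-p₁) ≤ 3 * (B * A ^ (-p₁)) := by nlinarith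
            have h2 : B * A ^ p₀ * A = B * A ^ (p₀ + 1) := by
              rw [Real.rpow_add_one hA0.ne']; ring
            nlinarith
        _ = 3 * B * t ^ (-(p₀ + 1) / (p₀ + p₁ + 1))
            + B * t ^ (-(p₀ + 1) / (p₀ + p₁ + 1)) := by rw [hT2, hT1]
        _ = 4 * B * t ^ (-(p₀ + 1) / (p₀ + p₁ + 1)) := by ring
  · -- part 2
    intro d hd hdm
    have hd1 : d ≤ 1 := hdm.trans (min_le_right _ _)
    have hdβ : d ≤ β := hdm.trans (min_le_left _ _)
    have hdpow0 : 0 ≤ d ^ (-p₁) := Real.rpow_nonneg hd.le _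
    have hd_pow : (1:ℝ) ≤ d ^ (-p₁) :=
      Real.one_le_rpow_of_pos_of_le_one_of_nonpos hd hd1 (neg_nonpos.2 hp₁)
    rcases eq_or_lt_of_le hdβ with he | hlt
    · have hempty : Ioo (m - β) (m - d) = ∅ := by rw [he]; exact Ioo_self _
      rw [hempty]
      simp only [Measure.restrict_empty, integral_zero_measure, norm_zero]
      have : (0:ℝ) ≤ 4 * B * t⁻¹ * d ^ (-p₁) := by positivity
      linarith
    · have hfar := aux_far hB ht hF hFb (hyp d ⟨hd, hlt⟩).2 ⟨hd, hlt⟩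
      refine hfar.trans ?_
      calc t⁻¹ * (2 * B + B * d ^ (-p₁)) ≤ t⁻¹ * (4 * B * d ^ (-p₁)) := by
            refine mul_le_mul_of_nonneg_left ?_ (inv_nonneg.2 ht.le)
            nlinarith
        _ = 4 * B * t⁻¹ * d ^ (-p₁) := by ring
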